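/- Let α, λ, β > 0 and f_V(v) = √(2/π) e^{-v²/2} for v > 0 (half-normal density). Then as x → -∞, ∫₀^∞ (1/π) e^{-(1+β²)((x-αv)λ/α)²/2} · (1/(β(1+β²))) · ((x-αv)λ/α)^{-2} f_V(v) dv ~ (α³/(πλ⁴β(1+β²)²)) √(2/π) |x|^{-3} e^{-(λ²/(2α²))(1+β²)x²}. -/

import Mathlib

open Real MeasureTheory Filter Set Topology

/-- Half-normal density (on v > 0). -/
noncomputable def halfNormalPdf (v : ℝ) : ℝ :=
  if 0 < v then Real.sqrt (2 / π) * Real.exp (-v ^ 2 / 2) else 0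

/-- Asymptotics of the dominant term of the joint tail integral:
∫₀^∞ (1/π) e^{-(1+β²)((x-αv)λ/α)²/2} (1/(β(1+β²))) ((x-αv)λ/α)⁻² f_V(v) dv
  ~ (α³/(πλ⁴β(1+β²)²)) √(2/π) |x|⁻³ e^{-(λ²/(2α²))(1+β²)x²}  as x → -∞. -/
theorem joint_tail_dominant_term (α l β : ℝ) (hα : 0 < α) (hl : 0 < l) (hβ : 0 < β) :
    Tendsto (fun x : ℝ =>
      (∫ v in Set.Ioi (0 : ℝ),
        (1 / π) * Real.exp (-(1 + β ^ 2) * ((x - α * v) * l / α) ^ 2 / 2) *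
          (1 / (β * (1 + β ^ 2))) * ((x - α * v) * l / α) ^ (-2 : ℤ) * halfNormalPdf v) /
      ((α ^ 3 / (π * l ^ 4 * β * (1 + β ^ 2) ^ 2)) * Real.sqrt (2 / π) *
        |x| ^ (-3 : ℤ) * Real.exp (-(l ^ 2 / (2 * α ^ 2)) * (1 + β ^ 2) * x ^ 2)))
      atBot (nhds 1) := by
  have hπ : (0:ℝ) < π := pi_pos
  have hc : (0:ℝ) < 1 + β ^ 2 := by positivity
  set c : ℝ := 1 + β ^ 2 with hc_def
  set A : ℝ := c * l ^ 2 / α ^ 2 with hA_def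
  have hA : 0 < A := by positivity
  set G : ℝ → ℝ → ℝ := fun x s =>
    ((1 + s / (A * x ^ 2))⁻¹) ^ 2 *
      Real.exp (-s - (A * α ^ 2 + 1) * (s ^ 2 / ((A * α) ^ 2 * x ^ 2)) / 2) with hG_def
  set D : ℝ → ℝ := fun x =>
    (α ^ 3 / (π * l ^ 4 * β * c ^ 2)) * Real.sqrt (2 / π) *
      |x| ^ (-3 : ℤ) * Real.exp (-(l ^ 2 / (2 * α ^ 2)) * c * x ^ 2) with hD_def
  -- the square function tends to atTop along atBot
  have hsq : Tendsto (fun x : ℝ => x ^ 2) atBot atTop := by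
    have h : Tendsto (fun x : ℝ => |x| ^ 2) atBot atTop :=
      (tendsto_pow_atTop two_ne_zero).comp tendsto_abs_atBot_atTop
    simpa [sq_abs] using h
  have hzero : ∀ (C K : ℝ), 0 < K → Tendsto (fun x : ℝ => C / (K * x ^ 2)) atBot (𝓝 0) := by
    intro C K hK
    have h := (hsq.const_mul_atTop hK).inv_tendsto_atTop
    have h2 := h.const_mul C
    simpa [div_eq_mul_inv] using h2
  -- Step 1: dominated convergence
  have key : Tendsto (fun x : ℝ => ∫ s in Ioi (0:ℝ), G x s) atBot (𝓝 1) := by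
    rw [← integral_exp_neg_Ioi_zero]
    apply tendsto_integral_filter_of_dominated_convergence (fun s : ℝ => Real.exp (-s))
    · filter_upwards with x
      apply Measurable.aestronglyMeasurable
      fun_prop
    · filter_upwards [eventually_lt_atBot (0:ℝ)] with x hx
      rw [ae_restrict_iff' measurableSet_Ioi]
      filter_upwards with s hs
      have hs' : 0 < s := hs
      have hx0 : x ≠ 0 := hx.ne
      have hGnn : 0 ≤ G x s := by
        simp only [hG_def]
        exact mul_nonneg (sq_nonneg _) (Real.exp_pos _).le
      rw [norm_eq_abs, abs_of_nonneg hGnn]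
      have h1 : ((1 + s / (A * x ^ 2))⁻¹) ^ 2 ≤ 1 := by
        have hden : (1:ℝ) ≤ 1 + s / (A * x ^ 2) := by
          have : 0 ≤ s / (A * x ^ 2) := by positivity
          linarith
        have : (1 + s / (A * x ^ 2))⁻¹ ≤ 1 := inv_le_one_of_one_le₀ hden
        have hnn : 0 ≤ (1 + s / (A * x ^ 2))⁻¹ := by positivity
        nlinarith
      have h2 : Real.exp (-s - (A * α ^ 2 + 1) * (s ^ 2 / ((A * α) ^ 2 * x ^ 2)) / 2)
          ≤ Real.exp (-s) := by
        apply Real.exp_le_exp.mpr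
        have : 0 ≤ (A * α ^ 2 + 1) * (s ^ 2 / ((A * α) ^ 2 * x ^ 2)) / 2 := by positivity
        linarith
      calc G x s ≤ 1 * Real.exp (-s) := by
            apply mul_le_mul h1 h2 (Real.exp_pos _).le zero_le_one
        _ = Real.exp (-s) := one_mul _
    · exact (by simpa using exp_neg_integrableOn_Ioi 0 one_pos :
        IntegrableOn (fun s : ℝ => Real.exp (-s)) (Ioi 0))
    · filter_upwards with s
      have hT1 : Tendsto (fun x : ℝ => s / (A * x ^ 2)) atBot (𝓝 0) := hzero s A hA
      have hT2 : Tendsto (fun x : ℝ => s ^ 2 / ((A * α) ^ 2 * x ^ 2)) atBot (𝓝 0) :=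
        hzero (s ^ 2) ((A * α) ^ 2) (by positivity)
      have hfac1 : Tendsto (fun x : ℝ => ((1 + s / (A * x ^ 2))⁻¹) ^ 2) atBot (𝓝 1) := by
        have h0 := ((tendsto_const_nhds (x := (1:ℝ)) (f := atBot)).add hT1)
        have := ((h0.inv₀ (by norm_num)).pow 2)
        simpa using this
      have hfac2 : Tendsto (fun x : ℝ =>
          Real.exp (-s - (A * α ^ 2 + 1) * (s ^ 2 / ((A * α) ^ 2 * x ^ 2)) / 2)) atBot
          (𝓝 (Real.exp (-s))) := by
        have harg : Tendsto (fun x : ℝ =>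
            -s - (A * α ^ 2 + 1) * (s ^ 2 / ((A * α) ^ 2 * x ^ 2)) / 2) atBot (𝓝 (-s)) := by
          have := (tendsto_const_nhds (x := -s) (f := atBot)).sub
            ((hT2.const_mul (A * α ^ 2 + 1)).div_const 2)
          simpa using this
        exact (Real.continuous_exp.tendsto _).comp harg
      have := hfac1.mul hfac2
      simp only [hG_def]
      simpa [inv_pow] using this
  -- Step 2: eventual equality of the ratio with ∫ G
  have heq : ∀ᶠ x in atBot, (∫ s in Ioi (0:ℝ), G x s) =
      (∫ v in Set.Ioi (0 : ℝ),
        (1 / π) * Real.exp (-c * ((x - α * v) * l / α) ^ 2 / 2) *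
          (1 / (β * c)) * ((x - α * v) * l / α) ^ (-2 : ℤ) * halfNormalPdf v) / D x := by
    filter_upwards [eventually_lt_atBot (0:ℝ)] with x hx
    have hx0 : x ≠ 0 := hx.ne
    have hnx : 0 < -x := neg_pos.mpr hx
    set m : ℝ := A * α * (-x) with hm_def
    have hm : 0 < m := by positivity
    have hDpos : 0 < D x := by
      have h3 : (0:ℝ) < |x| ^ (-3:ℤ) := zpow_pos (abs_pos.mpr hx0) _
      simp only [hD_def]
      positivity
    have hpoint : EqOn
        (fun v => (1 / π) * Real.exp (-c * ((x - α * v) * l / α) ^ 2 / 2) *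
          (1 / (β * c)) * ((x - α * v) * l / α) ^ (-2 : ℤ) * halfNormalPdf v)
        (fun v => m * (D x * G x (m * v))) (Ioi 0) := by
      intro v hv
      have hv0 : 0 < v := hv
      have hP : x - α * v ≠ 0 := by nlinarith
      have hz : ((x - α * v) * l / α) ^ (-2:ℤ) = (((x - α * v) * l / α) ^ 2)⁻¹ := by
        rw [zpow_neg, zpow_two, sq]
      have habs : |x| = -x := abs_of_neg hx
      have hz3 : |x| ^ (-3:ℤ) = ((-x) ^ 3)⁻¹ := by
        rw [habs, zpow_neg]
        norm_cast
      have hfrac : 1 + (m * v) / (A * x ^ 2) = (x - α * v) / x := by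
        rw [hm_def]
        field_simp
        ring
      simp only [halfNormalPdf, if_pos hv0, hz]
      simp only [hG_def, hD_def, hfrac, hz3]
      have hexp : (-c * ((x - α * v) * l / α) ^ 2 / 2) + (-v ^ 2 / 2) =
          (-(l ^ 2 / (2 * α ^ 2)) * c * x ^ 2) +
          (-(m * v) - (A * α ^ 2 + 1) * ((m * v) ^ 2 / ((A * α) ^ 2 * x ^ 2)) / 2) := by
        rw [hm_def, hA_def]
        field_simp
        ring
      have hconst : (1 / π) * (1 / (β * c)) * ((((x - α * v) * l / α) ^ 2)⁻¹) *
          Real.sqrt (2 / π) =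
          m * ((α ^ 3 / (π * l ^ 4 * β * c ^ 2)) * Real.sqrt (2 / π) * (((-x) ^ 3)⁻¹) *
            (((x - α * v) / x)⁻¹) ^ 2) := by
        rw [hm_def, hA_def, inv_div]
        field_simp
      calc (1 / π) * Real.exp (-c * ((x - α * v) * l / α) ^ 2 / 2) *
            (1 / (β * c)) * (((x - α * v) * l / α) ^ 2)⁻¹ *
            (Real.sqrt (2 / π) * Real.exp (-v ^ 2 / 2))
          = ((1 / π) * (1 / (β * c)) * ((((x - α * v) * l / α) ^ 2)⁻¹) * Real.sqrt (2 / π)) *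
            Real.exp ((-c * ((x - α * v) * l / α) ^ 2 / 2) + (-v ^ 2 / 2)) := by
            rw [Real.exp_add]; ring
        _ = (m * ((α ^ 3 / (π * l ^ 4 * β * c ^ 2)) * Real.sqrt (2 / π) * (((-x) ^ 3)⁻¹) *
              (((x - α * v) / x)⁻¹) ^ 2)) *
            Real.exp ((-(l ^ 2 / (2 * α ^ 2)) * c * x ^ 2) +
              (-(m * v) - (A * α ^ 2 + 1) * ((m * v) ^ 2 / ((A * α) ^ 2 * x ^ 2)) / 2)) := by
            rw [hexp, hconst]
        _ = m * ((α ^ 3 / (π * l ^ 4 * β * c ^ 2)) * Real.sqrt (2 / π) * (((-x) ^ 3)⁻¹) *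
              Real.exp (-(l ^ 2 / (2 * α ^ 2)) * c * x ^ 2) *
              ((((x - α * v) / x)⁻¹) ^ 2 *
                Real.exp (-(m * v) - (A * α ^ 2 + 1) * ((m * v) ^ 2 / ((A * α) ^ 2 * x ^ 2)) / 2))) := by
            rw [Real.exp_add]; ring
    have h1 : (∫ v in Set.Ioi (0 : ℝ),
        (1 / π) * Real.exp (-c * ((x - α * v) * l / α) ^ 2 / 2) *
          (1 / (β * c)) * ((x - α * v) * l / α) ^ (-2 : ℤ) * halfNormalPdf v)
        = ∫ v in Ioi (0:ℝ), m * (D x * G x (m * v)) :=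
      setIntegral_congr_fun measurableSet_Ioi hpoint
    have h2 : (∫ v in Ioi (0:ℝ), m * (D x * G x (m * v)))
        = m * ∫ v in Ioi (0:ℝ), D x * G x (m * v) := by
      rw [integral_const_mul]
    have h3 := integral_comp_mul_left_Ioi (fun s => D x * G x s) 0 hm
    simp only [mul_zero, smul_eq_mul] at h3
    have h4 : (∫ s in Ioi (0:ℝ), D x * G x s) = D x * ∫ s in Ioi (0:ℝ), G x s := by
      rw [integral_const_mul]
    rw [h1, h2, h3, h4]
    field_simp
  have := key.congr' heq
  simpa only [hc_def, hD_def] using this
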